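/- Consider the binary univariate Gaussian mixture setup with q_{ia} > 0, σ_{ia} > 0, and suppose (μ_{01} − μ_{11})/σ_{11} = (μ_{00} − μ_{10})/σ_{10}, σ_{11}/σ_{01} = σ_{10}/σ_{00}, and q_{10}/q_{00} = q_{11}/q_{01}. Then for every threshold t ∈ (0,1), the threshold classifier h_t(x,a) = 1{η(x,a) ≥ t} satisfies exact demographic parity: Σ_{i∈{0,1}} (q_{i0}/(q_{00}+q_{10})) · P_{X ~ N(μ_{i0}, σ_{i0}²)}(η(X,0) ≥ t) = Σ_{i∈{0,1}} (q_{i1}/(q_{01}+q_{11})) · P_{X ~ N(μ_{i1}, σ_{i1}²)}(η(X,1) ≥ t). -/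

import Mathlib

open MeasureTheory ProbabilityTheory

/-- Density of the univariate normal distribution `N(m, s²)`. -/
noncomputable def gaussPdf (m s x : ℝ) : ℝ :=
  (Real.sqrt (2 * Real.pi * s ^ 2))⁻¹ * Real.exp (-(x - m) ^ 2 / (2 * s ^ 2))

/-- The group-aware posterior `η(x, a) = q_{1a} φ_{1a}(x) / (q_{1a} φ_{1a}(x) + q_{0a} φ_{0a}(x))`. -/
noncomputable def posterior (q m s : Fin 2 → Fin 2 → ℝ) (x : ℝ) (a : Fin 2) : ℝ :=
  q 1 a * gaussPdf (m 1 a) (s 1 a) x /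
    (q 1 a * gaussPdf (m 1 a) (s 1 a) x + q 0 a * gaussPdf (m 0 a) (s 0 a) x)

lemma gaussPdf_pos (m : ℝ) {s : ℝ} (hs : 0 < s) (x : ℝ) : 0 < gaussPdf m s x := by
  unfold gaussPdf
  have := Real.pi_pos
  positivity

lemma sqrt_2pi_sq {s : ℝ} (hs : 0 < s) :
    Real.sqrt (2 * Real.pi * s ^ 2) = Real.sqrt (2 * Real.pi) * s := by
  rw [Real.sqrt_mul (by positivity), Real.sqrt_sq hs.le]

lemma gauss_apply (μ : ℝ) {σ : ℝ} (hσ : 0 < σ) {A : Set ℝ} (hA : MeasurableSet A) :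
    gaussianReal μ ((σ^2).toNNReal) A = gaussianReal 0 1 ((fun z => μ + σ*z) ⁻¹' A) := by
  have h1 : (gaussianReal 0 1).map (fun z => μ + σ*z) = gaussianReal μ ((σ^2).toNNReal) := by
    have hc : (fun z : ℝ => μ + σ*z) = (fun y => μ + y) ∘ (fun z => σ*z) := rfl
    rw [hc, ← Measure.map_map (by fun_prop : Measurable fun y : ℝ => μ + y)
      (by fun_prop : Measurable fun z : ℝ => σ * z),
      gaussianReal_map_const_mul, gaussianReal_map_const_add]
    congr 1
    · ring
    · ext
      simp [Real.coe_toNNReal _ (sq_nonneg σ)]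
  rw [← h1, Measure.map_apply (by fun_prop) hA]

lemma posterior_eq (q m s : Fin 2 → Fin 2 → ℝ)
    (hq : ∀ i a, 0 < q i a) (hs : ∀ i a, 0 < s i a)
    (hcond2 : s 1 1 / s 0 1 = s 1 0 / s 0 0)
    (hcond3 : q 1 0 / q 0 0 = q 1 1 / q 0 1)
    (x0 x1 : ℝ)
    (hE : (x0 - m 1 0) ^ 2 / (2 * s 1 0 ^ 2) + (x1 - m 0 1) ^ 2 / (2 * s 0 1 ^ 2)
        = (x1 - m 1 1) ^ 2 / (2 * s 1 1 ^ 2) + (x0 - m 0 0) ^ 2 / (2 * s 0 0 ^ 2)) :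
    posterior q m s x0 0 = posterior q m s x1 1 := by
  have h10 := gaussPdf_pos (m 1 0) (hs 1 0) x0
  have h00 := gaussPdf_pos (m 0 0) (hs 0 0) x0
  have h11 := gaussPdf_pos (m 1 1) (hs 1 1) x1
  have h01 := gaussPdf_pos (m 0 1) (hs 0 1) x1
  have hq00 := hq 0 0; have hq10 := hq 1 0; have hq01 := hq 0 1; have hq11 := hq 1 1
  have hkey : q 1 0 * gaussPdf (m 1 0) (s 1 0) x0 * (q 0 1 * gaussPdf (m 0 1) (s 0 1) x1)
      = q 1 1 * gaussPdf (m 1 1) (s 1 1) x1 * (q 0 0 * gaussPdf (m 0 0) (s 0 0) x0) := by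
    have hcond2' : s 1 1 * s 0 0 = s 1 0 * s 0 1 :=
      (div_eq_div_iff (hs 0 1).ne' (hs 0 0).ne').mp hcond2
    have hcond3' : q 1 0 * q 0 1 = q 1 1 * q 0 0 :=
      (div_eq_div_iff (hq 0 0).ne' (hq 0 1).ne').mp hcond3
    have hmul : q 1 0 * q 0 1 * ((s 1 0)⁻¹ * (s 0 1)⁻¹)
        = q 1 1 * q 0 0 * ((s 1 1)⁻¹ * (s 0 0)⁻¹) := by
      have h10 := (hs 1 0).ne'; have h01 := (hs 0 1).ne'
      have h11 := (hs 1 1).ne'; have h00 := (hs 0 0).ne'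
      field_simp
      linear_combination (s 1 1 * s 0 0) * hcond3' + (q 1 1 * q 0 0) * hcond2'
    have hEprod : Real.exp (-(x0 - m 1 0) ^ 2 / (2 * s 1 0 ^ 2)) *
          Real.exp (-(x1 - m 0 1) ^ 2 / (2 * s 0 1 ^ 2))
        = Real.exp (-(x1 - m 1 1) ^ 2 / (2 * s 1 1 ^ 2)) *
          Real.exp (-(x0 - m 0 0) ^ 2 / (2 * s 0 0 ^ 2)) := by
      rw [← Real.exp_add, ← Real.exp_add]
      congr 1
      linear_combination -hE
    unfold gaussPdf
    rw [sqrt_2pi_sq (hs 1 0), sqrt_2pi_sq (hs 0 1), sqrt_2pi_sq (hs 1 1), sqrt_2pi_sq (hs 0 0)]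
    linear_combination ((Real.sqrt (2 * Real.pi))⁻¹ * (Real.sqrt (2 * Real.pi))⁻¹ *
        (Real.exp (-(x0 - m 1 0) ^ 2 / (2 * s 1 0 ^ 2)) *
         Real.exp (-(x1 - m 0 1) ^ 2 / (2 * s 0 1 ^ 2)))) * hmul +
      (q 1 1 * q 0 0 * ((s 1 1)⁻¹ * (s 0 0)⁻¹) * ((Real.sqrt (2 * Real.pi))⁻¹ *
        (Real.sqrt (2 * Real.pi))⁻¹)) * hEprod
  unfold _root_.posterior
  rw [div_eq_div_iff (by positivity) (by positivity)]
  linear_combination hkey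

/-- in the binary univariate Gaussian mixture setup, the parametric
ideality conditions imply that every group-aware threshold classifier
`h_t(x,a) = 1{η(x,a) ≥ t}`, `t ∈ (0,1)`, satisfies exact demographic parity:
the positive rate on the group-conditional mixture distribution is equal for the
two groups. -/
theorem statement3 (q m s : Fin 2 → Fin 2 → ℝ)
    (hq : ∀ i a, 0 < q i a) (hqsum : ∑ i, ∑ a, q i a = 1)
    (hs : ∀ i a, 0 < s i a)
    (hcond1 : (m 0 1 - m 1 1) / s 1 1 = (m 0 0 - m 1 0) / s 1 0)
    (hcond2 : s 1 1 / s 0 1 = s 1 0 / s 0 0)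
    (hcond3 : q 1 0 / q 0 0 = q 1 1 / q 0 1) :
    ∀ t ∈ Set.Ioo (0 : ℝ) 1,
      (∑ i : Fin 2, q i 0 / (q 0 0 + q 1 0) *
        (gaussianReal (m i 0) ((s i 0 ^ 2).toNNReal)
          {x | posterior q m s x 0 ≥ t}).toReal) =
      (∑ i : Fin 2, q i 1 / (q 0 1 + q 1 1) *
        (gaussianReal (m i 1) ((s i 1 ^ 2).toNNReal)
          {x | posterior q m s x 1 ≥ t}).toReal) := by
  intro t ht
  have hcond1' : (m 0 1 - m 1 1) * s 1 0 = (m 0 0 - m 1 0) * s 1 1 :=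
    (div_eq_div_iff (hs 1 1).ne' (hs 1 0).ne').mp hcond1
  have hcond2' : s 1 1 * s 0 0 = s 1 0 * s 0 1 :=
    (div_eq_div_iff (hs 0 1).ne' (hs 0 0).ne').mp hcond2
  have hcond3' : q 1 0 * q 0 1 = q 1 1 * q 0 0 :=
    (div_eq_div_iff (hq 0 0).ne' (hq 0 1).ne').mp hcond3
  -- pointwise equality of posteriors in standardized coordinates
  have pe : ∀ i : Fin 2, ∀ z : ℝ,
      posterior q m s (m i 0 + s i 0 * z) 0 = posterior q m s (m i 1 + s i 1 * z) 1 := by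
    intro i z
    fin_cases i <;> simp only [Fin.zero_eta, Fin.mk_one]
    · -- i = 0
      apply posterior_eq q m s hq hs hcond2 hcond3
      have key0 : (m 0 0 - m 1 0 + s 0 0 * z) * s 1 1
          = (m 0 1 - m 1 1 + s 0 1 * z) * s 1 0 := by
        linear_combination -hcond1' + z * hcond2'
      have t1 : (m 0 1 + s 0 1 * z - m 0 1) ^ 2 / (2 * s 0 1 ^ 2)
          = (m 0 0 + s 0 0 * z - m 0 0) ^ 2 / (2 * s 0 0 ^ 2) := by
        rw [div_eq_div_iff (by have := hs 0 1; positivity) (by have := hs 0 0; positivity)]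
        ring
      have t2 : (m 0 0 + s 0 0 * z - m 1 0) ^ 2 / (2 * s 1 0 ^ 2)
          = (m 0 1 + s 0 1 * z - m 1 1) ^ 2 / (2 * s 1 1 ^ 2) := by
        rw [div_eq_div_iff (by have := hs 1 0; positivity) (by have := hs 1 1; positivity)]
        linear_combination (2 * ((m 0 0 - m 1 0 + s 0 0 * z) * s 1 1
          + (m 0 1 - m 1 1 + s 0 1 * z) * s 1 0)) * key0
      linarith [t1, t2]
    · -- i = 1
      apply posterior_eq q m s hq hs hcond2 hcond3
      have k1 : (m 0 1 - m 1 1) * s 0 0 = (m 0 0 - m 1 0) * s 0 1 := by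
        apply mul_left_cancel₀ (hs 1 0).ne'
        linear_combination s 0 0 * hcond1' + (m 0 0 - m 1 0) * hcond2'
      have key1 : (m 1 1 - m 0 1 + s 1 1 * z) * s 0 0
          = (m 1 0 - m 0 0 + s 1 0 * z) * s 0 1 := by
        linear_combination -k1 + z * hcond2'
      have t1 : (m 1 0 + s 1 0 * z - m 1 0) ^ 2 / (2 * s 1 0 ^ 2)
          = (m 1 1 + s 1 1 * z - m 1 1) ^ 2 / (2 * s 1 1 ^ 2) := by
        rw [div_eq_div_iff (by have := hs 1 0; positivity) (by have := hs 1 1; positivity)]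
        ring
      have t2 : (m 1 1 + s 1 1 * z - m 0 1) ^ 2 / (2 * s 0 1 ^ 2)
          = (m 1 0 + s 1 0 * z - m 0 0) ^ 2 / (2 * s 0 0 ^ 2) := by
        rw [div_eq_div_iff (by have := hs 0 1; positivity) (by have := hs 0 0; positivity)]
        linear_combination (2 * ((m 1 1 - m 0 1 + s 1 1 * z) * s 0 0
          + (m 1 0 - m 0 0 + s 1 0 * z) * s 0 1)) * key1
      linarith [t1, t2]
  -- measurability of the threshold sets
  have hmeas : ∀ a : Fin 2, MeasurableSet {x | posterior q m s x a ≥ t} := by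
    intro a
    have hc : Continuous fun x => posterior q m s x a := by
      apply Continuous.div
      · unfold gaussPdf; fun_prop
      · unfold gaussPdf; fun_prop
      · intro x
        exact (add_pos (mul_pos (hq 1 a) (gaussPdf_pos _ (hs 1 a) x))
          (mul_pos (hq 0 a) (gaussPdf_pos _ (hs 0 a) x))).ne'
    exact (isClosed_le continuous_const hc).measurableSet
  -- equality of mixture weights
  have hw : ∀ i : Fin 2, q i 0 / (q 0 0 + q 1 0) = q i 1 / (q 0 1 + q 1 1) := by
    intro i
    have hp0 : (0:ℝ) < q 0 0 + q 1 0 := add_pos (hq 0 0) (hq 1 0)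
    have hp1 : (0:ℝ) < q 0 1 + q 1 1 := add_pos (hq 0 1) (hq 1 1)
    rw [div_eq_div_iff hp0.ne' hp1.ne']
    fin_cases i <;> simp only [Fin.zero_eta, Fin.mk_one]
    · linear_combination -hcond3'
    · linear_combination hcond3'
  simp only [Fin.sum_univ_two]
  rw [gauss_apply _ (hs 0 0) (hmeas 0), gauss_apply _ (hs 1 0) (hmeas 0),
    gauss_apply _ (hs 0 1) (hmeas 1), gauss_apply _ (hs 1 1) (hmeas 1)]
  have hset : ∀ i : Fin 2,
      (fun z => m i 0 + s i 0 * z) ⁻¹' {x | posterior q m s x 0 ≥ t}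
        = (fun z => m i 1 + s i 1 * z) ⁻¹' {x | posterior q m s x 1 ≥ t} := by
    intro i
    ext z
    simp only [Set.mem_preimage, Set.mem_setOf_eq]
    rw [pe i z]
  rw [hset 0, hset 1, hw 0, hw 1]
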